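/- Let A be an (n,d)-type and P an ordered partition of [d] such that the refinement B = A|P is a total refinement (all entries singletons). Then the Minkowski cell C_B is a vertex (a single point) of the Minkowski cell C_A, namely the point Σ_{i=1}^n e_{b_i} where B_i = {b_i}. -/

import Mathlib

open Finset

/-- An `(n,d)`-type: an `n`-tuple of subsets of `[d]`. -/
abbrev NDType (n d : ℕ) := Fin n → Finset (Fin d)

/-- All entries nonempty. -/
def IsType {n d : ℕ} (A : NDType n d) : Prop := ∀ i, (A i).Nonempty

/-- A directed edge `u → v` of the comparability graph `CG(A,B)`:
for some coordinate `i`, `u ∈ A i`, `v ∈ B i`, and not both lie in `A i ∩ B i`. -/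
def DirEdge {n d : ℕ} (A B : NDType n d) (u v : Fin d) : Prop :=
  u ≠ v ∧ ∃ i, u ∈ A i ∧ v ∈ B i ∧ ¬ (u ∈ A i ∩ B i ∧ v ∈ A i ∩ B i)

/-- An undirected edge of `CG(A,B)`: both endpoints lie in some `A i ∩ B i`. -/
def UndirEdge {n d : ℕ} (A B : NDType n d) (u v : Fin d) : Prop :=
  u ≠ v ∧ ∃ i, u ∈ A i ∩ B i ∧ v ∈ A i ∩ B i

/-- A step of a directed walk in `CG(A,B)`: a directed edge in the right
direction, or an undirected edge. -/
def Step {n d : ℕ} (A B : NDType n d) (u v : Fin d) : Prop :=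
  DirEdge A B u v ∨ UndirEdge A B u v

/-- `CG(A,B)` contains a directed cycle: a closed walk all of whose directed
edges point in the walk direction, with at least one directed edge. -/
def HasDirectedCycle {n d : ℕ} (A B : NDType n d) : Prop :=
  ∃ (k : ℕ) (v : Fin (k + 1) → Fin d),
    v 0 = v (Fin.last k) ∧
    (∀ i : Fin k, Step A B (v i.castSucc) (v i.succ)) ∧
    (∃ i : Fin k, DirEdge A B (v i.castSucc) (v i.succ))

/-- The comparability graph `CG(A,B)` is acyclic. -/
def Acyclic {n d : ℕ} (A B : NDType n d) : Prop := ¬ HasDirectedCycle A B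

/-- An ordered partition of `[d]` into `k` (nonempty, ordered) parts. -/
def IsOrderedPartition {d k : ℕ} (P : Fin k → Finset (Fin d)) : Prop :=
  (∀ a, (P a).Nonempty) ∧ (∀ a b, a ≠ b → Disjoint (P a) (P b)) ∧
    (∀ j : Fin d, ∃ a, j ∈ P a)

/-- `B` is the refinement `A|P` of `A` with respect to the ordered partition `P`:
`B i = A i ∩ P (m i)` where `m i` is the least index with nonempty intersection. -/
def IsRefinementBy {n d k : ℕ} (A : NDType n d) (P : Fin k → Finset (Fin d))
    (B : NDType n d) : Prop :=
  ∀ i, ∃ a, (A i ∩ P a).Nonempty ∧ (∀ b, b < a → A i ∩ P b = ∅) ∧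
    B i = A i ∩ P a

/-- `B` is a refinement of `A` (with respect to some ordered partition). -/
def IsRefinement {n d : ℕ} (B A : NDType n d) : Prop :=
  ∃ (k : ℕ) (P : Fin k → Finset (Fin d)),
    IsOrderedPartition P ∧ IsRefinementBy A P B

/-- A total refinement: a refinement all of whose entries are singletons. -/
def IsTotalRefinement {n d : ℕ} (B A : NDType n d) : Prop :=
  IsRefinement B A ∧ ∀ i, ∃ j, B i = {j}

/-- A tope: a type all of whose entries are singletons. -/
def IsTope {n d : ℕ} (A : NDType n d) : Prop := ∀ i, ∃ j, A i = {j}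
open Pointwise

/-- The `j`-th standard basis vector of `ℝ^d`. -/
noncomputable def stdVec {d : ℕ} (j : Fin d) : Fin d → ℝ := Pi.single j 1

/-- The Minkowski cell `C_A = Σᵢ conv{e_j : j ∈ A i} ⊆ ℝ^d` of an `(n,d)`-type. -/
noncomputable def cell {n d : ℕ} (A : NDType n d) : Set (Fin d → ℝ) :=
  ∑ i : Fin n, convexHull ℝ (stdVec '' (A i : Set (Fin d)))

/-- The dilated simplex `nΔ^{d-1} ⊆ ℝ^d`. -/
def dilSimplex (n d : ℕ) : Set (Fin d → ℝ) :=
  {x | (∀ j, 0 ≤ x j) ∧ ∑ j, x j = (n : ℝ)}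

/-- A mixed subdivision of `nΔ^{d-1}`, encoded by the set of types of its cells:
all entries of a cell type are nonempty, the family of cells is closed under
faces (= refinements), any two cells intersect in the Minkowski sum of the
intersections of their summands, and the cells cover `nΔ^{d-1}`. -/
structure MixedSubdivision (n d : ℕ) where
  cells : Set (NDType n d)
  isType : ∀ A ∈ cells, IsType A
  refine_closed : ∀ A ∈ cells, ∀ B, IsRefinement B A → B ∈ cells
  inter : ∀ A ∈ cells, ∀ B ∈ cells,
    cell A ∩ cell B = cell (fun i => A i ∩ B i)
  covers : ⋃ A ∈ cells, cell A = dilSimplex n d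

/-- If `B = A|P` is a total refinement, `B i = {b i}`, then
`C_B` is the single point `Σᵢ e_{b i}`, and this point is a vertex (extreme
point) of `C_A`. -/
lemma sum_singleton_sets {ι α : Type*} [AddCommMonoid α] (s : Finset ι) (g : ι → α) :
    ∑ i ∈ s, ({g i} : Set α) = {∑ i ∈ s, g i} := by
  classical
  induction s using Finset.induction_on with
  | empty => simp [← Set.singleton_zero]
  | insert x s h ih => rw [Finset.sum_insert h, Finset.sum_insert h, ih, Set.singleton_add_singleton]

theorem total_refinement_is_vertex {n d k : ℕ} (A : NDType n d) (hA : IsType A)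
    (P : Fin k → Finset (Fin d)) (hP : IsOrderedPartition P)
    (B : NDType n d) (hB : IsRefinementBy A P B)
    (b : Fin n → Fin d) (hb : ∀ i, B i = {b i}) :
    cell B = {∑ i, stdVec (b i)} ∧
    (∑ i, stdVec (b i)) ∈ Set.extremePoints ℝ (cell A) := by
  classical
  obtain ⟨hPne, hPdisj, hPcov⟩ := hP
  choose a hane halt haeq using hB
  have hAB : ∀ i, A i ∩ P (a i) = {b i} := fun i => (haeq i).symm.trans (hb i)
  have hbmem : ∀ i, b i ∈ A i ∩ P (a i) := fun i => by
    rw [hAB i]; exact Finset.mem_singleton_self _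
  choose part hpart using hPcov
  have hpart_unique : ∀ j c, j ∈ P c → part j = c := by
    intro j c hj
    by_contra h
    exact Finset.disjoint_left.mp (hPdisj _ _ h) (hpart j) hj
  -- the linear functional
  set f : (Fin d → ℝ) →ₗ[ℝ] ℝ :=
    ∑ j, ((part j : ℕ) : ℝ) • (LinearMap.proj j : (Fin d → ℝ) →ₗ[ℝ] ℝ) with hf
  have hfapply : ∀ v, f v = ∑ j, ((part j : ℕ) : ℝ) * v j := by
    intro v
    simp [hf, LinearMap.sum_apply, smul_eq_mul]
  have hfsingle : ∀ j, f (stdVec j) = ((part j : ℕ) : ℝ) := by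
    intro j
    rw [hfapply, Finset.sum_eq_single j]
    · simp [stdVec]
    · intro j' _ hj'
      simp [stdVec, Pi.single_eq_of_ne hj']
    · simp
  have hpartb : ∀ i, part (b i) = a i := fun i =>
    hpart_unique _ _ (Finset.mem_inter.mp (hbmem i)).2
  -- lower bounds on coefficients over A i
  have hlow : ∀ i, ∀ j ∈ A i, (a i : ℕ) ≤ (part j : ℕ) := by
    intro i j hj
    by_contra h
    push_neg at h
    have h' : part j < a i := h
    have := halt i _ h'
    have hjmem : j ∈ A i ∩ P (part j) := Finset.mem_inter.mpr ⟨hj, hpart j⟩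
    rw [this] at hjmem
    exact absurd hjmem (Finset.notMem_empty j)
  have hlow' : ∀ i, ∀ j ∈ A i, j ≠ b i → (a i : ℕ) + 1 ≤ (part j : ℕ) := by
    intro i j hj hne
    rcases lt_or_eq_of_le (hlow i j hj) with h | h
    · omega
    · exfalso
      have heq : part j = a i := Fin.ext h.symm
      have : j ∈ A i ∩ P (a i) := Finset.mem_inter.mpr ⟨hj, heq ▸ hpart j⟩
      rw [hAB i] at this
      exact hne (Finset.mem_singleton.mp this)
  -- convex supersets
  set S : Fin n → Set (Fin d → ℝ) := fun i =>
    {v | (∀ j, 0 ≤ v j) ∧ ∑ j, v j = 1 ∧ ((a i : ℕ) : ℝ) + 1 - v (b i) ≤ f v} with hS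
  have hsub : ∀ i, convexHull ℝ (stdVec '' ((A i : Set (Fin d)))) ⊆ S i := by
    intro i
    apply convexHull_min
    · rintro _ ⟨j, hj, rfl⟩
      have hjA : j ∈ A i := hj
      refine ⟨fun j' => ?_, ?_, ?_⟩
      · by_cases h : j' = j <;> simp [stdVec, Pi.single_apply, h]
      · simp [stdVec]
      · rw [hfsingle]
        by_cases h : j = b i
        · subst h
          rw [hpartb i]
          simp [stdVec]
        · have h1 : stdVec j (b i) = 0 := by
            simp [stdVec, Pi.single_apply, Ne.symm h]  -- careful direction
          rw [h1]
          have h2 : ((a i : ℕ) : ℝ) + 1 ≤ ((part j : ℕ) : ℝ) := by exact_mod_cast hlow' i j hjA h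
          linarith
    · intro x hx y hy s t hs ht hst
      obtain ⟨hx1, hx2, hx3⟩ := hx
      obtain ⟨hy1, hy2, hy3⟩ := hy
      have happ : ∀ j, (s • x + t • y) j = s * x j + t * y j := fun j => rfl
      refine ⟨fun j => ?_, ?_, ?_⟩
      · rw [happ]
        have := mul_nonneg hs (hx1 j)
        have := mul_nonneg ht (hy1 j)
        linarith
      · simp only [happ]
        rw [Finset.sum_add_distrib, ← Finset.mul_sum, ← Finset.mul_sum, hx2, hy2]
        linarith
      · have hfl : f (s • x + t • y) = s * f x + t * f y := by
          simp [map_add, map_smul, smul_eq_mul]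
        rw [hfl, happ]
        nlinarith [mul_le_mul_of_nonneg_left hx3 hs, mul_le_mul_of_nonneg_left hy3 ht]
  -- the key lemma
  have hkey : ∀ x ∈ cell A,
      (∑ i, ((a i : ℕ) : ℝ)) ≤ f x ∧
        (f x ≤ ∑ i, ((a i : ℕ) : ℝ) → x = ∑ i, stdVec (b i)) := by
    intro x hx
    rw [cell, Set.mem_fintype_sum] at hx
    obtain ⟨g, hg, rfl⟩ := hx
    have hgS : ∀ i, g i ∈ S i := fun i => hsub i (hg i)
    have hgb1 : ∀ i, g i (b i) ≤ 1 := by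
      intro i
      obtain ⟨h1, h2, _⟩ := hgS i
      calc g i (b i) ≤ ∑ j, g i j := Finset.single_le_sum (fun j _ => h1 j) (Finset.mem_univ _)
      _ = 1 := h2
    have hge : ∀ i, ((a i : ℕ) : ℝ) ≤ f (g i) := by
      intro i
      obtain ⟨_, _, h3⟩ := hgS i
      linarith [hgb1 i]
    have hfsum : f (∑ i, g i) = ∑ i, f (g i) := map_sum f g Finset.univ
    constructor
    · rw [hfsum]
      exact Finset.sum_le_sum fun i _ => hge i
    · intro hle
      rw [hfsum] at hle
      have heq : ∀ i ∈ Finset.univ, ((a i : ℕ) : ℝ) = f (g i) :=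
        (Finset.sum_eq_sum_iff_of_le (fun i _ => hge i)).mp
          (le_antisymm (Finset.sum_le_sum fun i _ => hge i) hle)
      have hgeq : ∀ i, g i = stdVec (b i) := by
        intro i
        obtain ⟨h1, h2, h3⟩ := hgS i
        have hfb : f (g i) = ((a i : ℕ) : ℝ) := (heq i (Finset.mem_univ i)).symm
        have hb1 : (1 : ℝ) ≤ g i (b i) := by linarith [h3, hfb ▸ h3]
        have hb1' : g i (b i) = 1 := le_antisymm (hgb1 i) hb1
        funext j
        by_cases h : j = b i
        · subst h
          simp [stdVec, hb1']
        · have hsplit : g i (b i) + ∑ j' ∈ Finset.univ.erase (b i), g i j' = 1 := by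
            rw [Finset.add_sum_erase _ _ (Finset.mem_univ _)]
            exact h2
          have hzero : ∑ j' ∈ Finset.univ.erase (b i), g i j' = 0 := by linarith
          have := (Finset.sum_eq_zero_iff_of_nonneg
            (fun j' _ => h1 j')).mp hzero j (Finset.mem_erase.mpr ⟨h, Finset.mem_univ _⟩)
          simp [stdVec, Pi.single_apply, h, this]
      exact Finset.sum_congr rfl fun i _ => hgeq i
  -- membership of the point
  have hpA : (∑ i, stdVec (b i)) ∈ cell A := by
    rw [cell]
    apply Set.finset_sum_mem_finset_sum
    intro i _
    exact subset_convexHull ℝ _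
      (Set.mem_image_of_mem _ (Finset.mem_coe.mpr (Finset.mem_inter.mp (hbmem i)).1))
  have hfp : f (∑ i, stdVec (b i)) = ∑ i, ((a i : ℕ) : ℝ) := by
    rw [map_sum]
    exact Finset.sum_congr rfl fun i _ => by rw [hfsingle, hpartb i]
  constructor
  · -- cell B = {p}
    rw [cell]
    have : ∀ i ∈ Finset.univ, convexHull ℝ (stdVec '' ((B i : Finset (Fin d)) : Set (Fin d)))
        = ({stdVec (b i)} : Set (Fin d → ℝ)) := by
      intro i _
      rw [hb i]
      simp [convexHull_singleton]
    rw [Finset.sum_congr rfl this, sum_singleton_sets]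
  · refine mem_extremePoints.mpr ⟨hpA, ?_⟩
    intro x1 hx1 x2 hx2 hseg
    obtain ⟨s, t, hs, ht, hst, hpx⟩ := hseg
    obtain ⟨ha1, ha1'⟩ := hkey x1 hx1
    obtain ⟨ha2, ha2'⟩ := hkey x2 hx2
    have hfx : s * f x1 + t * f x2 = ∑ i, ((a i : ℕ) : ℝ) := by
      rw [← hfp, ← hpx]
      simp [map_add, map_smul, smul_eq_mul]
    have hsplit : s * (∑ i, ((a i : ℕ) : ℝ)) + t * (∑ i, ((a i : ℕ) : ℝ))
        = ∑ i, ((a i : ℕ) : ℝ) := by rw [← add_mul, hst, one_mul]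
    have e1 : f x1 ≤ ∑ i, ((a i : ℕ) : ℝ) := by
      by_contra h
      push_neg at h
      have h1 : s * (∑ i, ((a i : ℕ) : ℝ)) < s * f x1 := mul_lt_mul_of_pos_left h hs
      have h2 : t * (∑ i, ((a i : ℕ) : ℝ)) ≤ t * f x2 := mul_le_mul_of_nonneg_left ha2 ht.le
      linarith
    have e2 : f x2 ≤ ∑ i, ((a i : ℕ) : ℝ) := by
      by_contra h
      push_neg at h
      have h1 : t * (∑ i, ((a i : ℕ) : ℝ)) < t * f x2 := mul_lt_mul_of_pos_left h ht
      have h2 : s * (∑ i, ((a i : ℕ) : ℝ)) ≤ s * f x1 := mul_le_mul_of_nonneg_left ha1 hs.le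
      linarith
    exact ⟨ha1' e1, ha2' e2⟩
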